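/- (Proposition 3.4, case n = 1.) For every integer m > −c_{ij} and every e ∈ {1, −1}: ∑_{r+s=m, r,s≥0} (−1)^r q_i^{er(−c_{ij}−m+1)} B_i^{(r)} B_j B_i^{(s)} = 0. (In the universal quasi-split ıquantum group Ũ^ı this applies whenever i, τi, j ∈ I are pairwise distinct, since then B_i and B_j satisfy the quantum Serre relation below.) -/

import Mathlib

noncomputable section

/-- The quantum integer `[n]_v = (v^n - v^{-n})/(v - v^{-1})`. -/
def qint {K : Type*} [Field K] (v : RatFunc K) (n : ℤ) : RatFunc K :=
  (v ^ n - v ^ (-n)) / (v - v⁻¹)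

/-- The quantum factorial `[m]_v! = [1]_v [2]_v ⋯ [m]_v`. -/
def qfact {K : Type*} [Field K] (v : RatFunc K) (m : ℕ) : RatFunc K :=
  ∏ k ∈ Finset.range m, qint v ((k : ℤ) + 1)

/-- The divided power `x^{(m)} = x^m/[m]_v!` for `m ≥ 0`, and `0` for `m < 0`. -/
def dp {K : Type*} [Field K] {A : Type*} [Ring A] [Algebra (RatFunc K) A]
    (v : RatFunc K) (x : A) (m : ℤ) : A :=
  if m < 0 then 0 else (qfact v m.toNat)⁻¹ • x ^ m.toNat

section Aux

variable {K : Type*} [Field K]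

lemma aux_qint_zero {v : RatFunc K} : qint v 0 = 0 := by simp [qint]

lemma aux_qfact_succ (v : RatFunc K) (n : ℕ) :
    qfact v (n + 1) = qfact v n * qint v ((n : ℤ) + 1) := Finset.prod_range_succ _ _

lemma aux_X_pow_ne_one {N : ℕ} (hN : 0 < N) : (RatFunc.X : RatFunc K) ^ N ≠ 1 := by
  intro h
  have : (algebraMap (Polynomial K) (RatFunc K)) (Polynomial.X ^ N) =
      (algebraMap (Polynomial K) (RatFunc K)) 1 := by
    simpa [map_pow, RatFunc.algebraMap_X] using h
  have h2 := RatFunc.algebraMap_injective K this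
  have := congrArg Polynomial.natDegree h2
  simp [Polynomial.natDegree_X_pow] at this
  omega

lemma aux_vpow_ne_one {ε : ℕ} (hε : 0 < ε) {v : RatFunc K} (hv : v = RatFunc.X ^ ε)
    {k : ℤ} (hk : k ≠ 0) : v ^ k ≠ 1 := by
  have hv0 : v ≠ 0 := by
    rw [hv]; exact pow_ne_zero _ RatFunc.X_ne_zero
  rcases lt_or_gt_of_ne hk with h | h
  · intro hone
    have : v ^ (-k) = 1 := by
      rw [zpow_neg, hone, inv_one]
    rw [show -k = ((-k).toNat : ℤ) by omega, zpow_natCast, hv, ← pow_mul] at this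
    exact aux_X_pow_ne_one (Nat.mul_pos hε (by omega)) this
  · intro hone
    rw [show k = (k.toNat : ℤ) by omega, zpow_natCast, hv, ← pow_mul] at hone
    exact aux_X_pow_ne_one (Nat.mul_pos hε (by omega)) hone

section v

variable {ε : ℕ} (hε : 0 < ε) {v : RatFunc K} (hv : v = RatFunc.X ^ ε)

omit hε in
include hv in
lemma aux_hv0 : v ≠ 0 := by rw [hv]; exact pow_ne_zero _ RatFunc.X_ne_zero

include hε hv in
lemma aux_qint_ne_zero {k : ℤ} (hk : k ≠ 0) : qint v k ≠ 0 := by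
  have h0 := aux_hv0 hv
  have hvv : v - v⁻¹ ≠ 0 := by
    intro h
    have : v ^ (2 : ℤ) = 1 := by
      have := sub_eq_zero.mp h
      have h2 : v * v = v * v⁻¹ := by rw [← this]
      rw [mul_inv_cancel₀ h0] at h2
      rw [show (2:ℤ) = 1 + 1 by norm_num, zpow_add₀ h0, zpow_one, h2]
    exact aux_vpow_ne_one hε hv (by norm_num) this
  apply div_ne_zero _ hvv
  intro h
  have : v ^ (2 * k) = 1 := by
    have := sub_eq_zero.mp h
    calc v ^ (2 * k) = v ^ k * v ^ k := by rw [two_mul, zpow_add₀ h0]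
    _ = v ^ k * v ^ (-k) := by rw [← this]
    _ = 1 := by rw [← zpow_add₀ h0]; simp
  exact aux_vpow_ne_one hε hv (by omega) this

include hε hv in
lemma aux_qfact_ne_zero (m : ℕ) : qfact v m ≠ 0 := by
  rw [qfact]
  apply Finset.prod_ne_zero_iff.mpr
  intro k _
  exact aux_qint_ne_zero hε hv (by omega)

end v

section v2

variable {v : RatFunc K} (hv0 : v ≠ 0)
  (hq : ∀ k : ℤ, k ≠ 0 → qint v k ≠ 0) (hqf : ∀ m : ℕ, qfact v m ≠ 0)

include hv0 in
lemma aux_coeff_id (p q s : ℤ) (hs : p + q = s) :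
    v ^ p * qint v q + v ^ (-q) * qint v p = qint v s := by
  rw [qint, qint, qint, ← mul_div_assoc, ← mul_div_assoc, ← add_div]
  congr 1
  rw [mul_sub, mul_sub, ← zpow_add₀ hv0, ← zpow_add₀ hv0, ← zpow_add₀ hv0, ← zpow_add₀ hv0,
    show p + -q = -q + p by ring, show -q + -p = -s by omega, hs]
  ring

include hv0 in
lemma aux_coeff_step (e : ℤ) (he : e = 1 ∨ e = -1) (c : ℤ) (m r : ℕ) :
    qint v ((m:ℤ)+1) * ((-1 : RatFunc K)^(r+1) * v^(e*((r:ℤ)+1)*(-c-(m:ℤ))))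
    = ((-1 : RatFunc K)^(r+1) * v^(e*((r:ℤ)+1)*(-c-(m:ℤ)+1))) * qint v ((m:ℤ)-(r:ℤ))
      - v^(e*(-c-2*(m:ℤ))) *
        (((-1 : RatFunc K)^r * v^(e*(r:ℤ)*(-c-(m:ℤ)+1))) * qint v ((r:ℤ)+1)) := by
  rcases he with he | he <;> subst he
  · have cid := aux_coeff_id hv0 ((r:ℤ)+1) ((m:ℤ)-(r:ℤ)) ((m:ℤ)+1) (by ring)
    have h1 : v^((1:ℤ)*((r:ℤ)+1)*(-c-(m:ℤ)+1))
        = v^((1:ℤ)*((r:ℤ)+1)*(-c-(m:ℤ))) * v^((r:ℤ)+1) := by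
      rw [← zpow_add₀ hv0]; congr 1; ring
    have h2 : v^((1:ℤ)*(-c-2*(m:ℤ))) * v^((1:ℤ)*(r:ℤ)*(-c-(m:ℤ)+1))
        = v^((1:ℤ)*((r:ℤ)+1)*(-c-(m:ℤ))) * v^(-((m:ℤ)-(r:ℤ))) := by
      rw [← zpow_add₀ hv0, ← zpow_add₀ hv0]; congr 1; ring
    linear_combination (-((-1 : RatFunc K)^(r+1) * v^((1:ℤ)*((r:ℤ)+1)*(-c-(m:ℤ))))) * cid
      - ((-1 : RatFunc K)^(r+1) * qint v ((m:ℤ)-(r:ℤ))) * h1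
      - ((-1 : RatFunc K)^(r+1) * qint v ((r:ℤ)+1)) * h2
  · have cid := aux_coeff_id hv0 ((m:ℤ)-(r:ℤ)) ((r:ℤ)+1) ((m:ℤ)+1) (by ring)
    have h1 : v^((-1:ℤ)*((r:ℤ)+1)*(-c-(m:ℤ)+1))
        = v^((-1:ℤ)*((r:ℤ)+1)*(-c-(m:ℤ))) * v^(-((r:ℤ)+1)) := by
      rw [← zpow_add₀ hv0]; congr 1; ring
    have h2 : v^((-1:ℤ)*(-c-2*(m:ℤ))) * v^((-1:ℤ)*(r:ℤ)*(-c-(m:ℤ)+1))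
        = v^((-1:ℤ)*((r:ℤ)+1)*(-c-(m:ℤ))) * v^((m:ℤ)-(r:ℤ)) := by
      rw [← zpow_add₀ hv0, ← zpow_add₀ hv0]; congr 1; ring
    linear_combination (-((-1 : RatFunc K)^(r+1) * v^((-1:ℤ)*((r:ℤ)+1)*(-c-(m:ℤ))))) * cid
      - ((-1 : RatFunc K)^(r+1) * qint v ((m:ℤ)-(r:ℤ))) * h1
      - ((-1 : RatFunc K)^(r+1) * qint v ((r:ℤ)+1)) * h2

variable {A : Type*} [Ring A] [Algebra (RatFunc K) A]

include hq hqf in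
lemma aux_dp_mul_right (x : A) (n : ℤ) (hn : 0 ≤ n) :
    dp v x n * x = qint v (n + 1) • dp v x (n + 1) := by
  rw [dp, dp, if_neg (by omega), if_neg (by omega),
    show (n + 1).toNat = n.toNat + 1 by omega, aux_qfact_succ,
    show ((n.toNat : ℤ) + 1) = n + 1 by omega]
  rw [smul_mul_assoc, ← pow_succ, smul_smul]
  congr 1
  rw [mul_inv]
  field_simp [hqf n.toNat]
  exact (div_self (hq (n+1) (by omega))).symm

include hq hqf in
lemma aux_dp_mul_left (x : A) (n : ℤ) (hn : 0 ≤ n) :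
    x * dp v x n = qint v (n + 1) • dp v x (n + 1) := by
  rw [dp, dp, if_neg (by omega), if_neg (by omega),
    show (n + 1).toNat = n.toNat + 1 by omega, aux_qfact_succ,
    show ((n.toNat : ℤ) + 1) = n + 1 by omega]
  rw [mul_smul_comm, ← pow_succ', smul_smul]
  congr 1
  rw [mul_inv]
  field_simp [hqf n.toNat]
  exact (div_self (hq (n+1) (by omega))).symm

end v2

end Aux

theorem stmt11 {K : Type*} [Field K] [CharZero K]
    {A : Type*} [Ring A] [Algebra (RatFunc K) A]
    (ε : ℕ) (hε : 0 < ε) (v : RatFunc K) (hv : v = RatFunc.X ^ ε)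
    (Bi Bj : A) (c : ℤ) (hc : c ≤ 0)
    (hserre : ∑ n ∈ Finset.range ((1 - c).toNat + 1),
        ((-1 : RatFunc K) ^ n) • (dp v Bi (n : ℤ) * Bj * dp v Bi (1 - c - (n : ℤ))) = 0)
    (m : ℕ) (hm : -c < (m : ℤ)) (e : ℤ) (he : e = 1 ∨ e = -1) :
    ∑ r ∈ Finset.range (m + 1),
        ((-1 : RatFunc K) ^ r * v ^ (e * (r : ℤ) * (-c - (m : ℤ) + 1))) •
          (dp v Bi (r : ℤ) * Bj * dp v Bi ((m : ℤ) - (r : ℤ))) = 0 := by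
  have hv0 : v ≠ 0 := aux_hv0 hv
  have hq : ∀ k : ℤ, k ≠ 0 → qint v k ≠ 0 := fun k hk => aux_qint_ne_zero hε hv hk
  have hqf : ∀ M : ℕ, qfact v M ≠ 0 := aux_qfact_ne_zero hε hv
  suffices key : ∀ M : ℕ, (1 - c).toNat ≤ M →
      ∑ r ∈ Finset.range (M + 1),
        ((-1 : RatFunc K) ^ r * v ^ (e * (r : ℤ) * (-c - (M : ℤ) + 1))) •
          (dp v Bi (r : ℤ) * Bj * dp v Bi ((M : ℤ) - (r : ℤ))) = 0 by
    exact key m (by omega)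
  refine Nat.le_induction ?_ ?_
  · -- base case M = (1-c).toNat
    rw [← hserre]
    refine Finset.sum_congr rfl fun r hr => ?_
    have h1 : (((1 - c).toNat : ℤ)) = 1 - c := by omega
    rw [h1, show e * (r:ℤ) * (-c - (1 - c) + 1) = 0 by ring, zpow_zero, mul_one]
  · -- inductive step
    intro M hM ih
    have hSBi : (∑ r ∈ Finset.range (M + 1),
          ((-1 : RatFunc K) ^ r * v ^ (e * (r : ℤ) * (-c - (M : ℤ) + 1))) •
            (dp v Bi (r : ℤ) * Bj * dp v Bi ((M : ℤ) - (r : ℤ)))) * Bi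
        = ∑ r ∈ Finset.range (M + 1),
          (((-1 : RatFunc K) ^ r * v ^ (e * (r : ℤ) * (-c - (M : ℤ) + 1))) *
              qint v ((M : ℤ) - (r : ℤ) + 1)) •
            (dp v Bi (r : ℤ) * Bj * dp v Bi ((M : ℤ) - (r : ℤ) + 1)) := by
      rw [Finset.sum_mul]
      refine Finset.sum_congr rfl fun r hr => ?_
      have hr' := Finset.mem_range.mp hr
      rw [smul_mul_assoc, mul_assoc (dp v Bi (r : ℤ) * Bj),
        aux_dp_mul_right hq hqf Bi ((M : ℤ) - (r : ℤ)) (by omega),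
        mul_smul_comm, smul_smul]
    have hBiS : Bi * (∑ r ∈ Finset.range (M + 1),
          ((-1 : RatFunc K) ^ r * v ^ (e * (r : ℤ) * (-c - (M : ℤ) + 1))) •
            (dp v Bi (r : ℤ) * Bj * dp v Bi ((M : ℤ) - (r : ℤ))))
        = ∑ r ∈ Finset.range (M + 1),
          (((-1 : RatFunc K) ^ r * v ^ (e * (r : ℤ) * (-c - (M : ℤ) + 1))) *
              qint v ((r : ℤ) + 1)) •
            (dp v Bi ((r : ℤ) + 1) * Bj * dp v Bi ((M : ℤ) - (r : ℤ))) := by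
      rw [Finset.mul_sum]
      refine Finset.sum_congr rfl fun r hr => ?_
      rw [mul_smul_comm, ← mul_assoc, ← mul_assoc,
        aux_dp_mul_left hq hqf Bi (r : ℤ) (by omega),
        smul_mul_assoc, smul_mul_assoc, smul_smul]
    have hmain : ∑ r ∈ Finset.range (M + 1 + 1),
        (qint v ((M:ℤ)+1) * ((-1 : RatFunc K) ^ r * v ^ (e * (r : ℤ) * (-c - (M : ℤ))))) •
          (dp v Bi (r : ℤ) * Bj * dp v Bi ((M : ℤ) + 1 - (r : ℤ))) = 0 := by
      have hstep : ∑ r ∈ Finset.range (M + 1 + 1),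
          (qint v ((M:ℤ)+1) * ((-1 : RatFunc K) ^ r * v ^ (e * (r : ℤ) * (-c - (M : ℤ))))) •
            (dp v Bi (r : ℤ) * Bj * dp v Bi ((M : ℤ) + 1 - (r : ℤ)))
          = (∑ r ∈ Finset.range (M + 1),
              ((-1 : RatFunc K) ^ r * v ^ (e * (r : ℤ) * (-c - (M : ℤ) + 1))) •
                (dp v Bi (r : ℤ) * Bj * dp v Bi ((M : ℤ) - (r : ℤ)))) * Bi
            - v ^ (e * (-c - 2 * (M : ℤ))) • (Bi * ∑ r ∈ Finset.range (M + 1),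
              ((-1 : RatFunc K) ^ r * v ^ (e * (r : ℤ) * (-c - (M : ℤ) + 1))) •
                (dp v Bi (r : ℤ) * Bj * dp v Bi ((M : ℤ) - (r : ℤ)))) := by
        rw [hSBi, hBiS, Finset.smul_sum]
        have hp : ∑ r ∈ Finset.range (M + 1),
            (((-1 : RatFunc K) ^ r * v ^ (e * (r : ℤ) * (-c - (M : ℤ) + 1))) *
                qint v ((M : ℤ) - (r : ℤ) + 1)) •
              (dp v Bi (r : ℤ) * Bj * dp v Bi ((M : ℤ) - (r : ℤ) + 1))
            = ∑ r ∈ Finset.range (M + 1 + 1),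
            (((-1 : RatFunc K) ^ r * v ^ (e * (r : ℤ) * (-c - (M : ℤ) + 1))) *
                qint v ((M : ℤ) - (r : ℤ) + 1)) •
              (dp v Bi (r : ℤ) * Bj * dp v Bi ((M : ℤ) - (r : ℤ) + 1)) := by
          symm
          rw [Finset.sum_range_succ,
            show (M:ℤ) - ((M + 1 : ℕ) : ℤ) + 1 = 0 by push_cast; ring, aux_qint_zero,
            mul_zero, zero_smul, add_zero]
        rw [hp, Finset.sum_range_succ', Finset.sum_range_succ'
          (fun r => (((-1 : RatFunc K) ^ r * v ^ (e * (r : ℤ) * (-c - (M : ℤ) + 1))) *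
                qint v ((M : ℤ) - (r : ℤ) + 1)) •
              (dp v Bi (r : ℤ) * Bj * dp v Bi ((M : ℤ) - (r : ℤ) + 1))) (M + 1)]
        have hterm : ∀ k ∈ Finset.range (M + 1),
            (qint v ((M:ℤ)+1) * ((-1 : RatFunc K)^(k+1) *
                v^(e * ((k + 1 : ℕ) : ℤ) * (-c - (M:ℤ))))) •
              (dp v Bi ((k + 1 : ℕ) : ℤ) * Bj * dp v Bi ((M:ℤ) + 1 - ((k + 1 : ℕ) : ℤ)))
            = ((-1 : RatFunc K)^(k+1) * v^(e * ((k + 1 : ℕ) : ℤ) * (-c - (M:ℤ) + 1)) *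
                  qint v ((M:ℤ) - ((k + 1 : ℕ) : ℤ) + 1)) •
                (dp v Bi ((k + 1 : ℕ) : ℤ) * Bj * dp v Bi ((M:ℤ) - ((k + 1 : ℕ) : ℤ) + 1))
              - v^(e * (-c - 2 * (M:ℤ))) •
                (((-1 : RatFunc K)^k * v^(e * (k:ℤ) * (-c - (M:ℤ) + 1)) *
                    qint v ((k:ℤ) + 1)) •
                  (dp v Bi ((k:ℤ) + 1) * Bj * dp v Bi ((M:ℤ) - (k:ℤ)))) := by
          intro k hk
          push_cast
          rw [show (M:ℤ) + 1 - ((k:ℤ) + 1) = (M:ℤ) - (k:ℤ) by ring,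
            show (M:ℤ) - ((k:ℤ) + 1) + 1 = (M:ℤ) - (k:ℤ) by ring]
          rw [smul_smul, ← sub_smul]
          congr 1
          exact aux_coeff_step hv0 e he c M k
        rw [Finset.sum_congr rfl hterm, Finset.sum_sub_distrib]
        have h00 : (qint v ((M:ℤ)+1) * ((-1 : RatFunc K)^(0:ℕ) *
              v^(e * ((0 : ℕ) : ℤ) * (-c - (M:ℤ))))) •
            (dp v Bi ((0 : ℕ) : ℤ) * Bj * dp v Bi ((M:ℤ) + 1 - ((0 : ℕ) : ℤ)))
            = ((-1 : RatFunc K)^(0:ℕ) * v^(e * ((0 : ℕ) : ℤ) * (-c - (M:ℤ) + 1)) *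
                qint v ((M:ℤ) - ((0 : ℕ) : ℤ) + 1)) •
              (dp v Bi ((0 : ℕ) : ℤ) * Bj * dp v Bi ((M:ℤ) - ((0 : ℕ) : ℤ) + 1)) := by
          norm_num
        rw [h00]
        abel
      rw [hstep, ih]
      simp
    -- conclude: divide by qint v (M+1)
    have hqM : qint v ((M:ℤ)+1) ≠ 0 := hq _ (by omega)
    have final : ∑ r ∈ Finset.range (M + 1 + 1),
        ((-1 : RatFunc K) ^ r * v ^ (e * (r : ℤ) * (-c - (M : ℤ)))) •
          (dp v Bi (r : ℤ) * Bj * dp v Bi ((M : ℤ) + 1 - (r : ℤ))) = 0 := by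
      have h2 := congrArg (fun z => (qint v ((M:ℤ)+1))⁻¹ • z) hmain
      simp only [smul_zero, Finset.smul_sum, smul_smul, ← mul_assoc,
        inv_mul_cancel₀ hqM, one_mul] at h2
      exact h2
    rw [← final]
    refine Finset.sum_congr rfl fun r hr => ?_
    push_cast
    rw [show e * (r:ℤ) * (-c - ((M:ℤ) + 1) + 1) = e * (r:ℤ) * (-c - (M:ℤ)) by ring]
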